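/- Let o_n denote the number of independent dominating sets of the ortho-chain hexagonal cactus O_n for n ≥ 1, and set o_0 = 1 (the one-vertex graph O_0 has exactly one maximal independent set). Then, in the ring of formal power series over ℚ, (1 - 3X - 3X²) · (∑_{n≥0} o_n Xⁿ) = 1 + 2X + X². -/

import Mathlib

/-- `S` is an independent dominating set of `G`: pairwise non-adjacent, and every
vertex outside `S` has a neighbour in `S`. -/
def IsIndepDomSet {V : Type*} (G : SimpleGraph V) (S : Finset V) : Prop :=
  (∀ v ∈ S, ∀ w ∈ S, ¬ G.Adj v w) ∧ ∀ v, v ∉ S → ∃ w ∈ S, G.Adj v w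

/-- The ortho-chain hexagonal cactus `O n`: `Sum.inl i` is the cut vertex `x i`
(`0 ≤ i ≤ n`) and `Sum.inr (k, t)` for `t = 0, 1, 2, 3` is `a (k+1)`, `b (k+1)`,
`c (k+1)`, `d (k+1)` respectively (`0 ≤ k ≤ n-1`); the `i`-th hexagon
(`1 ≤ i ≤ n`) is the six-cycle `x (i-1) – x i – a i – b i – c i – d i – x (i-1)`. -/
def orthoHex (n : ℕ) : SimpleGraph (Fin (n + 1) ⊕ Fin n × Fin 4) :=
  SimpleGraph.fromRel fun p q =>
    match p, q with
    | Sum.inl i, Sum.inl j => (i : ℕ) + 1 = (j : ℕ)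
    | Sum.inl i, Sum.inr (k, t) =>
        ((i : ℕ) = (k : ℕ) + 1 ∧ t = 0) ∨ ((i : ℕ) = (k : ℕ) ∧ t = 3)
    | Sum.inr (k, t), Sum.inr (k', t') =>
        k = k' ∧ ((t = 0 ∧ t' = 1) ∨ (t = 1 ∧ t' = 2) ∨ (t = 2 ∧ t' = 3))
    | _, _ => False

/-- The number of independent dominating sets of the ortho-chain hexagonal cactus `O n`. -/
noncomputable def numIDSOrthoHex (n : ℕ) : ℕ :=
  Nat.card {S : Finset (Fin (n + 1) ⊕ Fin n × Fin 4) // IsIndepDomSet (orthoHex n) S}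

namespace OHex

abbrev V (n : ℕ) := Fin (n + 1) ⊕ Fin n × Fin 4

lemma adj_inl_inl {n} (i j : Fin (n+1)) :
    (orthoHex n).Adj (.inl i) (.inl j) ↔ ((i:ℕ)+1 = j ∨ (j:ℕ)+1 = i) := by
  show (Sum.inl i ≠ Sum.inl j ∧ _) ↔ _
  constructor
  · rintro ⟨-, h | h⟩
    · exact Or.inl h
    · exact Or.inr h
  · rintro (h | h)
    · exact ⟨by simp [Fin.ext_iff]; omega, Or.inl h⟩
    · exact ⟨by simp [Fin.ext_iff]; omega, Or.inr h⟩

lemma adj_inl_inr {n} (i : Fin (n+1)) (k : Fin n) (t : Fin 4) :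
    (orthoHex n).Adj (.inl i) (.inr (k, t)) ↔
      (((i:ℕ) = (k:ℕ) + 1 ∧ t = 0) ∨ ((i:ℕ) = (k:ℕ) ∧ t = 3)) := by
  show (_ ≠ _ ∧ (_ ∨ False)) ↔ _
  simp only [or_false]
  exact ⟨fun h => h.2, fun h => ⟨by simp, h⟩⟩

lemma adj_inr_inl {n} (i : Fin (n+1)) (k : Fin n) (t : Fin 4) :
    (orthoHex n).Adj (.inr (k, t)) (.inl i) ↔
      (((i:ℕ) = (k:ℕ) + 1 ∧ t = 0) ∨ ((i:ℕ) = (k:ℕ) ∧ t = 3)) :=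
  (orthoHex n).adj_comm _ _ |>.trans (adj_inl_inr i k t)

lemma adj_inr_inr {n} (k k' : Fin n) (t t' : Fin 4) :
    (orthoHex n).Adj (.inr (k, t)) (.inr (k', t')) ↔
      (k = k' ∧ ((t = 0 ∧ t' = 1) ∨ (t = 1 ∧ t' = 2) ∨ (t = 2 ∧ t' = 3)
        ∨ (t' = 0 ∧ t = 1) ∨ (t' = 1 ∧ t = 2) ∨ (t' = 2 ∧ t = 3))) := by
  show (_ ≠ _ ∧ ((k = k' ∧ _) ∨ (k' = k ∧ _))) ↔ _
  constructor
  · rintro ⟨hne, ⟨rfl, h⟩ | ⟨rfl, h⟩⟩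
    · exact ⟨rfl, by tauto⟩
    · exact ⟨rfl, by tauto⟩
  · rintro ⟨rfl, h⟩
    refine ⟨?_, by tauto⟩
    rintro heq
    injection heq with h2
    have : t = t' := (Prod.mk.injEq .. ▸ h2).2
    subst this
    rcases h with ⟨h1,h2⟩|⟨h1,h2⟩|⟨h1,h2⟩|⟨h1,h2⟩|⟨h1,h2⟩|⟨h1,h2⟩ <;> subst h1 <;> exact absurd h2 (by decide)

instance (n : ℕ) : DecidableRel (orthoHex n).Adj := fun p q => by
  rcases p with i | ⟨k, t⟩ <;> rcases q with j | ⟨k', t'⟩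
  · exact decidable_of_iff _ (adj_inl_inl i j).symm
  · exact decidable_of_iff _ (adj_inl_inr i k' t').symm
  · exact decidable_of_iff _ (adj_inr_inl j k t).symm
  · exact decidable_of_iff _ (adj_inr_inr k k' t t').symm

end OHex

namespace OHex

def ι {n : ℕ} : V n → V (n+1)
  | .inl i => .inl i.castSucc
  | .inr (k, t) => .inr (k.castSucc, t)

def Xv (n : ℕ) : V (n+1) := .inl (Fin.last (n+1))
def Wv (n : ℕ) (t : Fin 4) : V (n+1) := .inr (Fin.last n, t)

def xl (n : ℕ) : V n := .inl (Fin.last n)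

lemma ι_inj {n} {p q : V n} (h : ι p = ι q) : p = q := by
  rcases p with i | ⟨k, t⟩ <;> rcases q with j | ⟨k', t'⟩ <;> simp [ι] at h ⊢
  · exact h
  · exact ⟨h.1, h.2⟩

lemma ι_ne_X {n} (p : V n) : ι p ≠ Xv n := by
  rcases p with i | ⟨k, t⟩ <;> simp [ι, Xv]

lemma W_ne_X {n} (t : Fin 4) : Wv n t ≠ Xv n := by simp [Wv, Xv]

lemma ι_ne_W {n} (p : V n) (t : Fin 4) : ι p ≠ Wv n t := by
  rcases p with i | ⟨k, t'⟩ <;> simp [ι, Wv]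

lemma adj_ι_ι {n} (p q : V n) :
    (orthoHex (n+1)).Adj (ι p) (ι q) ↔ (orthoHex n).Adj p q := by
  rcases p with i | ⟨k, t⟩ <;> rcases q with j | ⟨k', t'⟩ <;>
    simp [ι, adj_inl_inl, adj_inl_inr, adj_inr_inl, adj_inr_inr, Fin.castSucc_inj]

lemma adj_ι_X {n} (p : V n) :
    (orthoHex (n+1)).Adj (ι p) (Xv n) ↔ p = xl n := by
  rcases p with i | ⟨k, t⟩ <;>
    simp [ι, Xv, xl, adj_inl_inl, adj_inr_inl, Fin.ext_iff, -Fin.val_eq_zero_iff]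
  · have := i.isLt; omega
  · have := k.isLt; omega

lemma adj_ι_W {n} (p : V n) (t : Fin 4) :
    (orthoHex (n+1)).Adj (ι p) (Wv n t) ↔ p = xl n ∧ t = 3 := by
  rcases p with i | ⟨k, t'⟩ <;>
    simp [ι, Wv, xl, adj_inl_inr, adj_inr_inr, Fin.ext_iff, -Fin.val_eq_zero_iff]
  · have := i.isLt; omega
  · intro h; have := k.isLt; omega

lemma adj_X_W {n} (t : Fin 4) :
    (orthoHex (n+1)).Adj (Xv n) (Wv n t) ↔ t = 0 := by
  simp [Xv, Wv, adj_inl_inr]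

lemma adj_W_W {n} (t t' : Fin 4) :
    (orthoHex (n+1)).Adj (Wv n t) (Wv n t') ↔
      ((t = 0 ∧ t' = 1) ∨ (t = 1 ∧ t' = 2) ∨ (t = 2 ∧ t' = 3)
        ∨ (t' = 0 ∧ t = 1) ∨ (t' = 1 ∧ t = 2) ∨ (t' = 2 ∧ t = 3)) := by
  simp [Wv, adj_inr_inr]

lemma adj_X_X {n} : ¬ (orthoHex (n+1)).Adj (Xv n) (Xv n) := (orthoHex (n+1)).irrefl

lemma forall_V_succ {n} (P : V (n+1) → Prop) :
    (∀ v, P v) ↔ (∀ p, P (ι p)) ∧ P (Xv n) ∧ (∀ t, P (Wv n t)) := by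
  constructor
  · exact fun h => ⟨fun p => h _, h _, fun t => h _⟩
  · rintro ⟨h1, h2, h3⟩ (i | ⟨k, t⟩)
    · induction i using Fin.lastCases with
      | last => exact h2
      | cast j => exact h1 (.inl j)
    · induction k using Fin.lastCases with
      | last => exact h3 t
      | cast j => exact h1 (.inr (j, t))

lemma exists_V_succ {n} (P : V (n+1) → Prop) :
    (∃ v, P v) ↔ (∃ p, P (ι p)) ∨ P (Xv n) ∨ (∃ t, P (Wv n t)) := by
  constructor
  · rintro ⟨v, hv⟩
    revert hv
    refine (forall_V_succ (fun v => P v → _)).mpr ?_ v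
    exact ⟨fun p h => Or.inl ⟨p, h⟩, fun h => Or.inr (Or.inl h), fun t h => Or.inr (Or.inr ⟨t, h⟩)⟩
  · rintro (⟨p, h⟩ | h | ⟨t, h⟩) <;> exact ⟨_, h⟩

end OHex

namespace OHex

def Indep (n : ℕ) (f : V n → Bool) : Prop :=
  ∀ v w, f v = true → f w = true → ¬ (orthoHex n).Adj v w

def Covp (n : ℕ) (f : V n → Bool) (v : V n) : Prop :=
  f v = true ∨ ∃ w, f w = true ∧ (orthoHex n).Adj v w

def covl (n : ℕ) (f : V n → Bool) : Prop :=
  ∃ w, f w = true ∧ (orthoHex n).Adj (xl n) w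

def GE (n : ℕ) (f : V n → Bool) : Prop :=
  Indep n f ∧ ∀ v, v ≠ xl n → Covp n f v

lemma V_succ_cases {n} (v : V (n+1)) : (∃ p, v = ι p) ∨ v = Xv n ∨ ∃ t, v = Wv n t := by
  refine (forall_V_succ (fun v => (∃ p, v = ι p) ∨ v = Xv n ∨ ∃ t, v = Wv n t)).mpr ?_ v
  exact ⟨fun p => Or.inl ⟨p, rfl⟩, Or.inr (Or.inl rfl), fun t => Or.inr (Or.inr ⟨t, rfl⟩)⟩

lemma indep_succ (n : ℕ) (f : V (n+1) → Bool) :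
    Indep (n+1) f ↔ Indep n (fun p => f (ι p)) ∧
      ¬(f (ι (xl n)) = true ∧ f (Xv n) = true) ∧
      ¬(f (Xv n) = true ∧ f (Wv n 0) = true) ∧
      ¬(f (Wv n 0) = true ∧ f (Wv n 1) = true) ∧
      ¬(f (Wv n 1) = true ∧ f (Wv n 2) = true) ∧
      ¬(f (Wv n 2) = true ∧ f (Wv n 3) = true) ∧
      ¬(f (Wv n 3) = true ∧ f (ι (xl n)) = true) := by
  constructor
  · intro h
    refine ⟨fun p q hp hq hadj => h _ _ hp hq ((adj_ι_ι ..).mpr hadj), ?_, ?_, ?_, ?_, ?_, ?_⟩ <;>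
      rintro ⟨h1, h2⟩
    · exact h _ _ h1 h2 ((adj_ι_X _).mpr rfl)
    · exact h _ _ h1 h2 ((adj_X_W _).mpr rfl)
    · exact h _ _ h1 h2 ((adj_W_W _ _).mpr (by decide))
    · exact h _ _ h1 h2 ((adj_W_W _ _).mpr (by decide))
    · exact h _ _ h1 h2 ((adj_W_W _ _).mpr (by decide))
    · exact h _ _ h2 h1 ((adj_ι_W _ _).mpr ⟨rfl, rfl⟩)
  · rintro ⟨hold, h1, h2, h3, h4, h5, h6⟩ v w hv hw hadj
    rcases V_succ_cases v with ⟨p, rfl⟩ | rfl | ⟨t, rfl⟩ <;>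
      rcases V_succ_cases w with ⟨q, rfl⟩ | rfl | ⟨t', rfl⟩
    · exact hold _ _ hv hw ((adj_ι_ι ..).mp hadj)
    · obtain rfl := (adj_ι_X _).mp hadj
      exact h1 ⟨hv, hw⟩
    · obtain ⟨rfl, rfl⟩ := (adj_ι_W ..).mp hadj
      exact h6 ⟨hw, hv⟩
    · obtain rfl := (adj_ι_X _).mp hadj.symm
      exact h1 ⟨hw, hv⟩
    · exact (orthoHex (n+1)).irrefl hadj
    · obtain rfl := (adj_X_W _).mp hadj
      exact h2 ⟨hv, hw⟩
    · obtain ⟨rfl, rfl⟩ := (adj_ι_W ..).mp hadj.symm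
      exact h6 ⟨hv, hw⟩
    · obtain rfl := (adj_X_W _).mp hadj.symm
      exact h2 ⟨hw, hv⟩
    · rcases (adj_W_W ..).mp hadj with ⟨rfl,rfl⟩|⟨rfl,rfl⟩|⟨rfl,rfl⟩|⟨rfl,rfl⟩|⟨rfl,rfl⟩|⟨rfl,rfl⟩
      · exact h3 ⟨hv, hw⟩
      · exact h4 ⟨hv, hw⟩
      · exact h5 ⟨hv, hw⟩
      · exact h3 ⟨hw, hv⟩
      · exact h4 ⟨hw, hv⟩
      · exact h5 ⟨hw, hv⟩


lemma cov_ι {n} (f : V (n+1) → Bool) (p : V n) (hp : p ≠ xl n) :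
    Covp (n+1) f (ι p) ↔ Covp n (fun q => f (ι q)) p := by
  unfold Covp
  constructor
  · rintro (h | ⟨w, hw, hadj⟩)
    · exact Or.inl h
    · rcases V_succ_cases w with ⟨q, rfl⟩ | rfl | ⟨t, rfl⟩
      · exact Or.inr ⟨q, hw, (adj_ι_ι ..).mp hadj⟩
      · exact absurd ((adj_ι_X _).mp hadj) hp
      · exact absurd ((adj_ι_W ..).mp hadj).1 hp
  · rintro (h | ⟨q, hq, hadj⟩)
    · exact Or.inl h
    · exact Or.inr ⟨ι q, hq, (adj_ι_ι ..).mpr hadj⟩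

lemma cov_ι_xl {n} (f : V (n+1) → Bool) :
    Covp (n+1) f (ι (xl n)) ↔
      (f (ι (xl n)) = true ∨ covl n (fun q => f (ι q)) ∨ f (Xv n) = true ∨ f (Wv n 3) = true) := by
  unfold Covp covl
  constructor
  · rintro (h | ⟨w, hw, hadj⟩)
    · exact Or.inl h
    · rcases V_succ_cases w with ⟨q, rfl⟩ | rfl | ⟨t, rfl⟩
      · exact Or.inr (Or.inl ⟨q, hw, (adj_ι_ι ..).mp hadj⟩)
      · exact Or.inr (Or.inr (Or.inl hw))
      · obtain ⟨-, rfl⟩ := (adj_ι_W ..).mp hadj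
        exact Or.inr (Or.inr (Or.inr hw))
  · rintro (h | ⟨q, hq, hadj⟩ | h | h)
    · exact Or.inl h
    · exact Or.inr ⟨ι q, hq, (adj_ι_ι ..).mpr hadj⟩
    · exact Or.inr ⟨Xv n, h, (adj_ι_X _).mpr rfl⟩
    · exact Or.inr ⟨Wv n 3, h, (adj_ι_W ..).mpr ⟨rfl, rfl⟩⟩

lemma cov_X {n} (f : V (n+1) → Bool) :
    Covp (n+1) f (Xv n) ↔
      (f (Xv n) = true ∨ f (ι (xl n)) = true ∨ f (Wv n 0) = true) := by
  unfold Covp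
  constructor
  · rintro (h | ⟨w, hw, hadj⟩)
    · exact Or.inl h
    · rcases V_succ_cases w with ⟨q, rfl⟩ | rfl | ⟨t, rfl⟩
      · obtain rfl := (adj_ι_X _).mp hadj.symm
        exact Or.inr (Or.inl hw)
      · exact absurd hadj ((orthoHex (n+1)).irrefl)
      · obtain rfl := (adj_X_W _).mp hadj
        exact Or.inr (Or.inr hw)
  · rintro (h | h | h)
    · exact Or.inl h
    · exact Or.inr ⟨ι (xl n), h, ((adj_ι_X _).mpr rfl).symm⟩
    · exact Or.inr ⟨Wv n 0, h, (adj_X_W _).mpr rfl⟩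

lemma cov_W {n} (f : V (n+1) → Bool) (t : Fin 4) :
    Covp (n+1) f (Wv n t) ↔
      (f (Wv n t) = true ∨
        (∃ t', f (Wv n t') = true ∧ ((t = 0 ∧ t' = 1) ∨ (t = 1 ∧ t' = 2) ∨ (t = 2 ∧ t' = 3)
          ∨ (t' = 0 ∧ t = 1) ∨ (t' = 1 ∧ t = 2) ∨ (t' = 2 ∧ t = 3))) ∨
        (t = 0 ∧ f (Xv n) = true) ∨ (t = 3 ∧ f (ι (xl n)) = true)) := by
  unfold Covp
  constructor
  · rintro (h | ⟨w, hw, hadj⟩)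
    · exact Or.inl h
    · rcases V_succ_cases w with ⟨q, rfl⟩ | rfl | ⟨t2, rfl⟩
      · obtain ⟨rfl, rfl⟩ := (adj_ι_W ..).mp hadj.symm
        exact Or.inr (Or.inr (Or.inr ⟨rfl, hw⟩))
      · obtain rfl := (adj_X_W _).mp hadj.symm
        exact Or.inr (Or.inr (Or.inl ⟨rfl, hw⟩))
      · exact Or.inr (Or.inl ⟨t2, hw, (adj_W_W ..).mp hadj⟩)
  · rintro (h | ⟨t', ht', hadj⟩ | ⟨rfl, h⟩ | ⟨rfl, h⟩)
    · exact Or.inl h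
    · exact Or.inr ⟨Wv n t', ht', (adj_W_W ..).mpr hadj⟩
    · exact Or.inr ⟨Xv n, h, ((adj_X_W _).mpr rfl).symm⟩
    · exact Or.inr ⟨ι (xl n), h, ((adj_ι_W ..).mpr ⟨rfl, rfl⟩).symm⟩

lemma forall_fin4 (P : Fin 4 → Prop) : (∀ t, P t) ↔ P 0 ∧ P 1 ∧ P 2 ∧ P 3 := by
  constructor
  · exact fun h => ⟨h 0, h 1, h 2, h 3⟩
  · rintro ⟨h0, h1, h2, h3⟩ t
    fin_cases t <;> assumption

lemma exists_fin4 (P : Fin 4 → Prop) : (∃ t, P t) ↔ P 0 ∨ P 1 ∨ P 2 ∨ P 3 := by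
  constructor
  · rintro ⟨t, ht⟩
    fin_cases t <;> tauto
  · rintro (h|h|h|h) <;> exact ⟨_, h⟩

lemma dom_succ (n : ℕ) (f : V (n+1) → Bool) :
    (∀ v, v ≠ xl (n+1) → Covp (n+1) f v) ↔
      ((∀ p, p ≠ xl n → Covp n (fun q => f (ι q)) p) ∧
       (f (ι (xl n)) = true ∨ covl n (fun q => f (ι q)) ∨ f (Xv n) = true ∨ f (Wv n 3) = true) ∧
       (f (Wv n 0) = true ∨ f (Xv n) = true ∨ f (Wv n 1) = true) ∧
       (f (Wv n 1) = true ∨ f (Wv n 0) = true ∨ f (Wv n 2) = true) ∧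
       (f (Wv n 2) = true ∨ f (Wv n 1) = true ∨ f (Wv n 3) = true) ∧
       (f (Wv n 3) = true ∨ f (Wv n 2) = true ∨ f (ι (xl n)) = true)) := by
  have hXX : Xv n = xl (n+1) := rfl
  rw [forall_V_succ (fun v => v ≠ xl (n+1) → Covp (n+1) f v)]
  have hιX : ∀ p : V n, ι p ≠ xl (n+1) := fun p => ι_ne_X p
  have hWX : ∀ t, Wv n t ≠ xl (n+1) := fun t => W_ne_X t
  simp only [hXX.symm]
  constructor
  · rintro ⟨hι, -, hW⟩
    refine ⟨fun p hp => (cov_ι f p hp).mp (hι p (hιX p)), (cov_ι_xl f).mp (hι _ (hιX _)), ?_, ?_, ?_, ?_⟩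
    · have := (cov_W f 0).mp (hW 0 (hWX 0))
      revert this
      rw [exists_fin4 (fun t' => f (Wv n t') = true ∧ _)]
      rintro (h | (⟨h,-⟩|⟨h,hc⟩|⟨h,hc⟩|⟨h,hc⟩) | ⟨-, h⟩ | ⟨h, -⟩) <;> first | tauto | (exfalso; revert hc; decide)
    · have := (cov_W f 1).mp (hW 1 (hWX 1))
      revert this
      rw [exists_fin4 (fun t' => f (Wv n t') = true ∧ _)]
      rintro (h | (⟨h,hc⟩|⟨h,hc⟩|⟨h,hc⟩|⟨h,hc⟩) | ⟨h, -⟩ | ⟨h, -⟩) <;>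
        first | tauto | (exfalso; revert hc; decide) | (exfalso; revert h; decide)
    · have := (cov_W f 2).mp (hW 2 (hWX 2))
      revert this
      rw [exists_fin4 (fun t' => f (Wv n t') = true ∧ _)]
      rintro (h | (⟨h,hc⟩|⟨h,hc⟩|⟨h,hc⟩|⟨h,hc⟩) | ⟨h, -⟩ | ⟨h, -⟩) <;>
        first | tauto | (exfalso; revert hc; decide) | (exfalso; revert h; decide)
    · have := (cov_W f 3).mp (hW 3 (hWX 3))
      revert this
      rw [exists_fin4 (fun t' => f (Wv n t') = true ∧ _)]
      rintro (h | (⟨h,hc⟩|⟨h,hc⟩|⟨h,hc⟩|⟨h,hc⟩) | ⟨h, -⟩ | ⟨-, h⟩) <;>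
        first | tauto | (exfalso; revert hc; decide) | (exfalso; revert h; decide)
  · rintro ⟨hold, hxl, h0, h1, h2, h3⟩
    refine ⟨?_, fun h => absurd rfl h, ?_⟩
    · intro p _
      by_cases hp : p = xl n
      · subst hp
        exact (cov_ι_xl f).mpr hxl
      · exact (cov_ι f p hp).mpr (hold p hp)
    · intro t _
      fin_cases t
      · refine (cov_W f 0).mpr ?_
        rcases h0 with h|h|h
        · exact Or.inl h
        · exact Or.inr (Or.inr (Or.inl ⟨rfl, h⟩))
        · exact Or.inr (Or.inl ⟨1, h, by decide⟩)
      · refine (cov_W f 1).mpr ?_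
        rcases h1 with h|h|h
        · exact Or.inl h
        · exact Or.inr (Or.inl ⟨0, h, by decide⟩)
        · exact Or.inr (Or.inl ⟨2, h, by decide⟩)
      · refine (cov_W f 2).mpr ?_
        rcases h2 with h|h|h
        · exact Or.inl h
        · exact Or.inr (Or.inl ⟨1, h, by decide⟩)
        · exact Or.inr (Or.inl ⟨3, h, by decide⟩)
      · refine (cov_W f 3).mpr ?_
        rcases h3 with h|h|h
        · exact Or.inl h
        · exact Or.inr (Or.inl ⟨2, h, by decide⟩)
        · exact Or.inr (Or.inr (Or.inr ⟨rfl, h⟩))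


def Local (s : Bool) (cov : Prop) (u : Bool) (w : Fin 4 → Bool) : Prop :=
  (¬(s = true ∧ u = true)) ∧ (¬(u = true ∧ w 0 = true)) ∧ (¬(w 0 = true ∧ w 1 = true)) ∧
  (¬(w 1 = true ∧ w 2 = true)) ∧ (¬(w 2 = true ∧ w 3 = true)) ∧ (¬(w 3 = true ∧ s = true)) ∧
  (s = true ∨ cov ∨ u = true ∨ w 3 = true) ∧
  (w 0 = true ∨ u = true ∨ w 1 = true) ∧
  (w 1 = true ∨ w 0 = true ∨ w 2 = true) ∧
  (w 2 = true ∨ w 1 = true ∨ w 3 = true) ∧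
  (w 3 = true ∨ w 2 = true ∨ s = true)

lemma GE_succ (n : ℕ) (f : V (n+1) → Bool) :
    GE (n+1) f ↔ GE n (fun p => f (ι p)) ∧
      Local (f (ι (xl n))) (covl n (fun p => f (ι p))) (f (Xv n)) (fun t => f (Wv n t)) := by
  unfold GE Local
  rw [indep_succ, dom_succ]
  constructor
  · rintro ⟨⟨hA, hB1, hB2, hB3, hB4, hB5, hB6⟩, hC, hD1, hD2, hD3, hD4, hD5⟩
    exact ⟨⟨hA, hC⟩, hB1, hB2, hB3, hB4, hB5, hB6, hD1, hD2, hD3, hD4, hD5⟩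
  · rintro ⟨⟨hA, hC⟩, hB1, hB2, hB3, hB4, hB5, hB6, hD1, hD2, hD3, hD4, hD5⟩
    exact ⟨⟨hA, hB1, hB2, hB3, hB4, hB5, hB6⟩, hC, hD1, hD2, hD3, hD4, hD5⟩

lemma covl_succ (n : ℕ) (f : V (n+1) → Bool) :
    covl (n+1) f ↔ (f (ι (xl n)) = true ∨ f (Wv n 0) = true) := by
  have h := cov_X f
  unfold Covp at h
  unfold covl
  have hXX : Xv n = xl (n+1) := rfl
  rw [← hXX]
  constructor
  · rintro ⟨w, hw, hadj⟩
    rcases V_succ_cases w with ⟨q, rfl⟩ | rfl | ⟨t, rfl⟩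
    · obtain rfl := (adj_ι_X _).mp hadj.symm
      exact Or.inl hw
    · exact absurd hadj ((orthoHex (n+1)).irrefl)
    · obtain rfl := (adj_X_W _).mp hadj
      exact Or.inr hw
  · rintro (h1 | h1)
    · exact ⟨ι (xl n), h1, ((adj_ι_X _).mpr rfl).symm⟩
    · exact ⟨Wv n 0, h1, (adj_X_W _).mpr rfl⟩

end OHex

namespace OHex

open Classical in
lemma card_or2 {A : Type} [Finite A] (p q : A -> Prop)
    (hpq : forall a, p a -> q a -> False) :
    Nat.card {x // p x \/ q x} = Nat.card {x // p x} + Nat.card {x // q x} := by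
  have hd : Disjoint p q :=
    Pi.disjoint_iff.mpr fun a => Prop.disjoint_iff.mpr (fun h => hpq a h.1 h.2)
  rw [Nat.card_congr (subtypeOrEquiv p q hd), Nat.card_sum]

open Classical in
lemma card_or3 {A : Type} [Finite A] (p q r : A -> Prop)
    (hpq : forall a, p a -> q a -> False) (hpr : forall a, p a -> r a -> False)
    (hqr : forall a, q a -> r a -> False) :
    Nat.card {x // p x \/ q x \/ r x} =
      Nat.card {x // p x} + Nat.card {x // q x} + Nat.card {x // r x} := by
  rw [card_or2 p (fun x => q x \/ r x) (fun a hp h => h.elim (hpq a hp) (hpr a hp)),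
    card_or2 q r hqr, Nat.add_assoc]

def hexOK (s cov u : Bool) (w : Fin 4 -> Bool) : Bool :=
  (!(s && u)) && (!(u && w 0)) && (!(w 0 && w 1)) && (!(w 1 && w 2)) && (!(w 2 && w 3)) &&
  (!(w 3 && s)) && (s || cov || u || w 3) && (w 0 || u || w 1) && (w 1 || w 0 || w 2) &&
  (w 2 || w 1 || w 3) && (w 3 || w 2 || s)

def qA (s cov : Bool) (p : Bool × (Fin 4 -> Bool)) : Bool :=
  hexOK s cov p.1 p.2 && p.1
def qB (s cov : Bool) (p : Bool × (Fin 4 -> Bool)) : Bool :=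
  hexOK s cov p.1 p.2 && !p.1 && (s || p.2 0)
def qC (s cov : Bool) (p : Bool × (Fin 4 -> Bool)) : Bool :=
  hexOK s cov p.1 p.2 && !p.1 && !(s || p.2 0)

def stA (n : ℕ) (g : V n -> Bool) : Prop := GE n g ∧ g (xl n) = true
def stB (n : ℕ) (g : V n -> Bool) : Prop := GE n g ∧ g (xl n) = false ∧ covl n g
def stC (n : ℕ) (g : V n -> Bool) : Prop := GE n g ∧ g (xl n) = false ∧ ¬ covl n g

noncomputable def aN (n : ℕ) : ℕ := Nat.card {g : V n -> Bool // stA n g}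
noncomputable def bN (n : ℕ) : ℕ := Nat.card {g : V n -> Bool // stB n g}
noncomputable def cN (n : ℕ) : ℕ := Nat.card {g : V n -> Bool // stC n g}

def eqv (n : ℕ) : (V (n+1) -> Bool) ≃ (V n -> Bool) × (Bool × (Fin 4 -> Bool)) where
  toFun f := (fun p => f (ι p), f (Xv n), fun t => f (Wv n t))
  invFun g := fun v =>
    match v with
    | .inl i => Fin.lastCases g.2.1 (fun j => g.1 (.inl j)) i
    | .inr (k, t) => Fin.lastCases (g.2.2 t) (fun j => g.1 (.inr (j, t))) k
  left_inv f := by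
    funext v
    rcases v with i | ⟨k, t⟩
    · induction i using Fin.lastCases with
      | last => simp; rfl
      | cast j => simp [ι]
    · induction k using Fin.lastCases with
      | last => simp; rfl
      | cast j => simp [ι]
  right_inv g := by
    refine Prod.ext ?_ (Prod.ext ?_ ?_)
    · funext p
      rcases p with i | ⟨k, t⟩ <;> simp [ι, Xv, Wv]
    · simp [Xv]
    · funext t
      simp [Wv]

end OHex

namespace OHex

lemma split_A (n : ℕ) (g : V n -> Bool) (u : Bool) (w : Fin 4 -> Bool) :
    (GE n g ∧ Local (g (xl n)) (covl n g) u w ∧ u = true) ↔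
      ((stA n g ∧ qA true true (u, w) = true) ∨ (stB n g ∧ qA false true (u, w) = true) ∨
        (stC n g ∧ qA false false (u, w) = true)) := by
  unfold stA stB stC Local qA hexOK
  by_cases hc : covl n g <;> cases hs : g (xl n) <;> cases hu : u <;>
    cases h0 : w 0 <;> cases h1 : w 1 <;> cases h2 : w 2 <;> cases h3 : w 3 <;>
    simp_all

lemma split_B (n : ℕ) (g : V n -> Bool) (u : Bool) (w : Fin 4 -> Bool) :
    (GE n g ∧ Local (g (xl n)) (covl n g) u w ∧ u = false ∧
        (g (xl n) = true ∨ w 0 = true)) ↔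
      ((stA n g ∧ qB true true (u, w) = true) ∨ (stB n g ∧ qB false true (u, w) = true) ∨
        (stC n g ∧ qB false false (u, w) = true)) := by
  unfold stA stB stC Local qB hexOK
  by_cases hc : covl n g <;> cases hs : g (xl n) <;> cases hu : u <;>
    cases h0 : w 0 <;> cases h1 : w 1 <;> cases h2 : w 2 <;> cases h3 : w 3 <;>
    simp_all

lemma split_C (n : ℕ) (g : V n -> Bool) (u : Bool) (w : Fin 4 -> Bool) :
    (GE n g ∧ Local (g (xl n)) (covl n g) u w ∧ u = false ∧
        ¬(g (xl n) = true ∨ w 0 = true)) ↔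
      ((stA n g ∧ qC true true (u, w) = true) ∨ (stB n g ∧ qC false true (u, w) = true) ∨
        (stC n g ∧ qC false false (u, w) = true)) := by
  unfold stA stB stC Local qC hexOK
  by_cases hc : covl n g <;> cases hs : g (xl n) <;> cases hu : u <;>
    cases h0 : w 0 <;> cases h1 : w 1 <;> cases h2 : w 2 <;> cases h3 : w 3 <;>
    simp_all

end OHex

namespace OHex

lemma card_prod_split {A : Type} [Finite A] (p : A -> Prop) (q : Bool × (Fin 4 -> Bool) -> Bool) :
    Nat.card {x : A × (Bool × (Fin 4 -> Bool)) // p x.1 ∧ q x.2 = true} =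
      Nat.card {a // p a} * Nat.card {c // q c = true} := by
  exact (Nat.card_congr (Equiv.subtypeProdEquivProd (p := p) (q := fun c => q c = true))).trans
    (Nat.card_prod _ _)

lemma step_A (n : ℕ) : aN (n+1) = 2 * bN n + 2 * cN n := by
  have he : ∀ f : V (n+1) -> Bool, stA (n+1) f ↔
      ((fun x : (V n -> Bool) × (Bool × (Fin 4 -> Bool)) =>
        (stA n x.1 ∧ qA true true x.2 = true) ∨ (stB n x.1 ∧ qA false true x.2 = true) ∨
          (stC n x.1 ∧ qA false false x.2 = true)) (eqv n f)) := by
    intro f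
    show (GE (n+1) f ∧ f (Xv n) = true) ↔ _
    rw [GE_succ]
    rw [and_assoc]
    exact split_A n (fun p => f (ι p)) (f (Xv n)) (fun t => f (Wv n t))
  rw [aN, Nat.card_congr (Equiv.subtypeEquiv
      (q := fun x : (V n -> Bool) × (Bool × (Fin 4 -> Bool)) =>
        (stA n x.1 ∧ qA true true x.2 = true) ∨ (stB n x.1 ∧ qA false true x.2 = true) ∨
          (stC n x.1 ∧ qA false false x.2 = true)) (eqv n) he),
    card_or3 _ _ _
      (fun x h1 h2 => by simp [stA, stB] at h1 h2; obtain ⟨⟨-, e1⟩, -⟩ := h1; obtain ⟨⟨-, e2, -⟩, -⟩ := h2; simp [e1] at e2)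
      (fun x h1 h2 => by simp [stA, stC] at h1 h2; obtain ⟨⟨-, e1⟩, -⟩ := h1; obtain ⟨⟨-, e2, -⟩, -⟩ := h2; simp [e1] at e2)
      (fun x h1 h2 => by simp [stB, stC] at h1 h2; obtain ⟨⟨-, -, e1⟩, -⟩ := h1; obtain ⟨⟨-, -, e2⟩, -⟩ := h2; exact e2 e1),
    card_prod_split, card_prod_split, card_prod_split]
  have c1 : Nat.card {c : Bool × (Fin 4 -> Bool) // qA true true c = true} = 0 := by
    rw [Nat.card_eq_fintype_card]; decide
  have c2 : Nat.card {c : Bool × (Fin 4 -> Bool) // qA false true c = true} = 2 := by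
    rw [Nat.card_eq_fintype_card]; decide
  have c3 : Nat.card {c : Bool × (Fin 4 -> Bool) // qA false false c = true} = 2 := by
    rw [Nat.card_eq_fintype_card]; decide
  rw [c1, c2, c3]
  show aN n * 0 + bN n * 2 + cN n * 2 = _
  ring

end OHex

namespace OHex

lemma step_B (n : ℕ) : bN (n+1) = 2 * aN n + 2 * bN n + cN n := by
  have he : ∀ f : V (n+1) -> Bool, stB (n+1) f ↔
      ((fun x : (V n -> Bool) × (Bool × (Fin 4 -> Bool)) =>
        (stA n x.1 ∧ qB true true x.2 = true) ∨ (stB n x.1 ∧ qB false true x.2 = true) ∨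
          (stC n x.1 ∧ qB false false x.2 = true)) (eqv n f)) := by
    intro f
    show (GE (n+1) f ∧ f (Xv n) = false ∧ covl (n+1) f) ↔ _
    rw [GE_succ, covl_succ, and_assoc]
    exact split_B n (fun p => f (ι p)) (f (Xv n)) (fun t => f (Wv n t))
  rw [bN, Nat.card_congr (Equiv.subtypeEquiv
      (q := fun x : (V n -> Bool) × (Bool × (Fin 4 -> Bool)) =>
        (stA n x.1 ∧ qB true true x.2 = true) ∨ (stB n x.1 ∧ qB false true x.2 = true) ∨
          (stC n x.1 ∧ qB false false x.2 = true)) (eqv n) he),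
    card_or3 _ _ _
      (fun x h1 h2 => by simp [stA, stB] at h1 h2; obtain ⟨⟨-, e1⟩, -⟩ := h1; obtain ⟨⟨-, e2, -⟩, -⟩ := h2; simp [e1] at e2)
      (fun x h1 h2 => by simp [stA, stC] at h1 h2; obtain ⟨⟨-, e1⟩, -⟩ := h1; obtain ⟨⟨-, e2, -⟩, -⟩ := h2; simp [e1] at e2)
      (fun x h1 h2 => by simp [stB, stC] at h1 h2; obtain ⟨⟨-, -, e1⟩, -⟩ := h1; obtain ⟨⟨-, -, e2⟩, -⟩ := h2; exact e2 e1),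
    card_prod_split, card_prod_split, card_prod_split]
  have c1 : Nat.card {c : Bool × (Fin 4 -> Bool) // qB true true c = true} = 2 := by
    rw [Nat.card_eq_fintype_card]; decide
  have c2 : Nat.card {c : Bool × (Fin 4 -> Bool) // qB false true c = true} = 2 := by
    rw [Nat.card_eq_fintype_card]; decide
  have c3 : Nat.card {c : Bool × (Fin 4 -> Bool) // qB false false c = true} = 1 := by
    rw [Nat.card_eq_fintype_card]; decide
  rw [c1, c2, c3]
  show aN n * 2 + bN n * 2 + cN n * 1 = _
  ring

lemma step_C (n : ℕ) : cN (n+1) = bN n + cN n := by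
  have he : ∀ f : V (n+1) -> Bool, stC (n+1) f ↔
      ((fun x : (V n -> Bool) × (Bool × (Fin 4 -> Bool)) =>
        (stA n x.1 ∧ qC true true x.2 = true) ∨ (stB n x.1 ∧ qC false true x.2 = true) ∨
          (stC n x.1 ∧ qC false false x.2 = true)) (eqv n f)) := by
    intro f
    show (GE (n+1) f ∧ f (Xv n) = false ∧ ¬ covl (n+1) f) ↔ _
    rw [GE_succ, covl_succ, and_assoc]
    exact split_C n (fun p => f (ι p)) (f (Xv n)) (fun t => f (Wv n t))
  rw [cN, Nat.card_congr (Equiv.subtypeEquiv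
      (q := fun x : (V n -> Bool) × (Bool × (Fin 4 -> Bool)) =>
        (stA n x.1 ∧ qC true true x.2 = true) ∨ (stB n x.1 ∧ qC false true x.2 = true) ∨
          (stC n x.1 ∧ qC false false x.2 = true)) (eqv n) he),
    card_or3 _ _ _
      (fun x h1 h2 => by simp [stA, stB] at h1 h2; obtain ⟨⟨-, e1⟩, -⟩ := h1; obtain ⟨⟨-, e2, -⟩, -⟩ := h2; simp [e1] at e2)
      (fun x h1 h2 => by simp [stA, stC] at h1 h2; obtain ⟨⟨-, e1⟩, -⟩ := h1; obtain ⟨⟨-, e2, -⟩, -⟩ := h2; simp [e1] at e2)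
      (fun x h1 h2 => by simp [stB, stC] at h1 h2; obtain ⟨⟨-, -, e1⟩, -⟩ := h1; obtain ⟨⟨-, -, e2⟩, -⟩ := h2; exact e2 e1),
    card_prod_split, card_prod_split, card_prod_split]
  have c1 : Nat.card {c : Bool × (Fin 4 -> Bool) // qC true true c = true} = 0 := by
    rw [Nat.card_eq_fintype_card]; decide
  have c2 : Nat.card {c : Bool × (Fin 4 -> Bool) // qC false true c = true} = 1 := by
    rw [Nat.card_eq_fintype_card]; decide
  have c3 : Nat.card {c : Bool × (Fin 4 -> Bool) // qC false false c = true} = 1 := by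
    rw [Nat.card_eq_fintype_card]; decide
  rw [c1, c2, c3]
  show aN n * 0 + bN n * 1 + cN n * 1 = _
  ring

end OHex

namespace OHex

instance (n : ℕ) (f : V n -> Bool) : Decidable (covl n f) := by
  unfold covl; infer_instance

instance (n : ℕ) (f : V n -> Bool) : Decidable (GE n f) := by
  unfold GE Indep Covp; exact instDecidableAnd

instance (n : ℕ) : DecidablePred (stA n) := fun g => by unfold stA; infer_instance
instance (n : ℕ) : DecidablePred (stB n) := fun g => by unfold stB; infer_instance
instance (n : ℕ) : DecidablePred (stC n) := fun g => by unfold stC; infer_instance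

lemma aN0 : aN 0 = 1 := by rw [aN, Nat.card_eq_fintype_card]; decide
lemma bN0 : bN 0 = 0 := by rw [bN, Nat.card_eq_fintype_card]; decide
lemma cN0 : cN 0 = 1 := by rw [cN, Nat.card_eq_fintype_card]; decide

end OHex


namespace OHex

def fEquiv (n : ℕ) : Finset (V n) ≃ (V n -> Bool) where
  toFun S v := decide (v ∈ S)
  invFun f := Finset.univ.filter (fun v => f v = true)
  left_inv S := by ext v; simp
  right_inv f := by funext v; simp

lemma ids_iff (n : ℕ) (S : Finset (V n)) :
    IsIndepDomSet (orthoHex n) S ↔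
      (fun f => stA n f ∨ stB n f) (fEquiv n S) := by
  show _ ↔ stA n (fun v => decide (v ∈ S)) ∨ stB n (fun v => decide (v ∈ S))
  set f : V n -> Bool := fun v => decide (v ∈ S) with hf
  have hmem : ∀ v, f v = true ↔ v ∈ S := fun v => by simp [hf]
  constructor
  · rintro ⟨hi, hd⟩
    have hIndep : Indep n f := fun v w hv hw =>
      hi v ((hmem v).mp hv) w ((hmem w).mp hw)
    have hcov : ∀ v, Covp n f v := by
      intro v
      by_cases hv : v ∈ S
      · exact Or.inl ((hmem v).mpr hv)
      · obtain ⟨w, hw, hadj⟩ := hd v hv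
        exact Or.inr ⟨w, (hmem w).mpr hw, hadj⟩
    have hGE : GE n f := ⟨hIndep, fun v _ => hcov v⟩
    cases hxe : f (xl n)
    · refine Or.inr ⟨hGE, hxe, ?_⟩
      rcases hcov (xl n) with h | h
      · rw [hxe] at h; exact absurd h (by simp)
      · exact h
    · exact Or.inl ⟨hGE, hxe⟩
  · have hindep : Indep n f -> ∀ v ∈ S, ∀ w ∈ S, ¬ (orthoHex n).Adj v w :=
      fun hi v hv w hw => hi v w ((hmem v).mpr hv) ((hmem w).mpr hw)
    have hdom : (∀ v, v ≠ xl n -> Covp n f v) -> Covp n f (xl n) ->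
        ∀ v, v ∉ S -> ∃ w ∈ S, (orthoHex n).Adj v w := by
      intro hd hxl v hv
      have hcv : Covp n f v := by
        by_cases h : v = xl n
        · exact h ▸ hxl
        · exact hd v h
      rcases hcv with h | ⟨w, hw, hadj⟩
      · exact absurd ((hmem v).mp h) hv
      · exact ⟨w, (hmem w).mp hw, hadj⟩
    rintro (⟨⟨hi, hd⟩, hx⟩ | ⟨⟨hi, hd⟩, hx, hc⟩)
    · exact ⟨hindep hi, hdom hd (Or.inl hx)⟩
    · exact ⟨hindep hi, hdom hd (Or.inr hc)⟩

lemma numIDS_eq (n : ℕ) : numIDSOrthoHex n = aN n + bN n := by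
  rw [numIDSOrthoHex,
    Nat.card_congr (Equiv.subtypeEquiv (q := fun f => stA n f ∨ stB n f) (fEquiv n) (ids_iff n)),
    card_or2 _ _ (fun g h1 h2 => by
      obtain ⟨-, e1⟩ := h1
      obtain ⟨-, e2, -⟩ := h2
      simp [e1] at e2)]
  rfl

lemma numIDS0 : numIDSOrthoHex 0 = 1 := by rw [numIDS_eq, aN0, bN0]

lemma numIDS1 : numIDSOrthoHex 1 = 5 := by
  rw [numIDS_eq, step_A 0, step_B 0, aN0, bN0, cN0]

lemma numIDS2 : numIDSOrthoHex 2 = 19 := by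
  rw [numIDS_eq, step_A 1, step_B 1, step_A 0, step_B 0, step_C 0, aN0, bN0, cN0]

lemma numIDS_rec (n : ℕ) :
    numIDSOrthoHex (n+3) = 3 * numIDSOrthoHex (n+2) + 3 * numIDSOrthoHex (n+1) := by
  have e1 := numIDS_eq (n+3)
  have e2 := numIDS_eq (n+2)
  have e3 := numIDS_eq (n+1)
  have sA1 := step_A n; have sB1 := step_B n; have sC1 := step_C n
  have sA2 := step_A (n+1); have sB2 := step_B (n+1); have sC2 := step_C (n+1)
  have sA3 := step_A (n+2); have sB3 := step_B (n+2)
  simp only [show n+1+1 = n+2 from rfl, show n+2+1 = n+3 from rfl] at *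
  omega

end OHex

open PowerSeries in
/-- In `ℚ⟦X⟧`, `(1 - 3X - 3X²) · ∑_{n≥0} o_n Xⁿ = 1 + 2X + X²`, where `o n` is the
number of independent dominating sets of `O n` (and `o 0 = 1`, `O 0` being the
one-vertex graph). -/
theorem numIDSOrthoHex_generating_function :
    (1 - 3 * PowerSeries.X - 3 * PowerSeries.X ^ 2) *
        PowerSeries.mk (fun n : ℕ => (numIDSOrthoHex n : ℚ)) =
      1 + 2 * PowerSeries.X + PowerSeries.X ^ 2 := by

  set F := PowerSeries.mk (fun n : ℕ => (numIDSOrthoHex n : ℚ)) with hF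
  have h : F = 1 + C 2 * X + X ^ 2 + C 3 * (X * F) + C 3 * (X * (X * F)) := by
    ext n
    have hXX : ∀ m (G : ℚ⟦X⟧), coeff m (X * G) =
        if h : m = 0 then 0 else coeff (m - 1) G := by
      rintro (_ | m) G
      · simp [coeff_zero_X_mul]
      · simp [coeff_succ_X_mul]
    simp only [map_add, coeff_one, coeff_X, coeff_X_pow, coeff_C_mul, hXX, hF, coeff_mk,
      PowerSeries.coeff_mk]
    match n with
    | 0 => simp [OHex.numIDS0]
    | 1 => simp [OHex.numIDS1, OHex.numIDS0]; norm_num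
    | 2 => simp [OHex.numIDS2, OHex.numIDS1, OHex.numIDS0]; norm_num
    | (k+3) =>
      have := OHex.numIDS_rec k
      simp only [show k+3-1 = k+2 from rfl, show k+2-1 = k+1 from rfl]
      norm_num
      push_cast [this]
      ring
  have h3 : (C) 3 = (3 : ℚ⟦X⟧) := by simp [map_ofNat]
  have h2 : (C) 2 = (2 : ℚ⟦X⟧) := by simp [map_ofNat]
  rw [h3, h2] at h
  linear_combination h
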